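/- For any reflexive graphs X and X', the inclusion of the edge subcategory (ŷ × ŷ ↓ (X, X'))_{(E,E)} — the full subcategory of the comma category (ŷ × ŷ) ↓ (X, X') spanned by the objects of the form ((E,E), (f, f') : (ŷ(E), ŷ(E)) → (X, X')) — into (ŷ × ŷ) ↓ (X, X') is a final functor. -/

import Mathlib

open CategoryTheory MonoidalCategory

/-- The category of (reflexive) graphs: an object is a set of vertices with an
irreflexive symmetric adjacency relation. -/
structure GraphCat : Type 1 where
  V : Type
  adj : V → V → Prop
  symm : ∀ {v w : V}, adj v w → adj w v
  loopless : ∀ v : V, ¬ adj v v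

namespace GraphCat

/-- A graph map: whenever `v ∼ w`, either `f v = f w` or `f v ∼ f w`. -/
structure Hom (X Y : GraphCat) where
  toFun : X.V → Y.V
  map_adj : ∀ {v w : X.V}, X.adj v w → toFun v = toFun w ∨ Y.adj (toFun v) (toFun w)

theorem Hom.ext' {X Y : GraphCat} {f g : Hom X Y} (h : f.toFun = g.toFun) : f = g := by
  cases f; cases g; cases h; rfl

instance : Category GraphCat where
  Hom := Hom
  id X := ⟨fun v => v, fun h => Or.inr h⟩
  comp f g := ⟨fun v => g.toFun (f.toFun v), fun {v w} h => by
    rcases f.map_adj h with h' | h'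
    · exact Or.inl (congrArg g.toFun h')
    · exact g.map_adj h'⟩
  id_comp f := Hom.ext' rfl
  comp_id f := Hom.ext' rfl
  assoc f g h := Hom.ext' rfl

/-- The one-vertex graph `I₀`. -/
def I0 : GraphCat := ⟨PUnit, fun _ _ => False, fun h => h, fun _ h => h⟩

/-- The graph `I₁` with two vertices `s = false` and `t = true` joined by an edge. -/
def I1 : GraphCat := ⟨Bool, fun v w => v ≠ w, Ne.symm, fun _ h => h rfl⟩

end GraphCat

open GraphCat

/-- The two objects of the category `𝔾`. -/
inductive GObj : Type
  | V : GObj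
  | E : GObj

/-- The underlying sets realizing `𝔾` concretely: `V ↦ PUnit` and `E ↦ Bool`. -/
def GFib : GObj → Type
  | .V => PUnit
  | .E => Bool

/-- The category `𝔾`, generated by `s, t : V → E`, `r : E → V`, `σ : E → E` subject to
`r∘s = r∘t = id`, `σ² = id`, `σ∘s = t`, `σ∘t = s`, `r∘σ = r`; realized concretely as the
full subcategory of `Set` spanned by a one-element set (for `V`) and a two-element set
(for `E`), which satisfies exactly these generators and relations. -/
instance : Category GObj where
  Hom a b := GFib a → GFib b
  id a := fun x => x
  comp f g := fun x => g (f x)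
  id_comp _ := rfl
  comp_id _ := rfl
  assoc _ _ _ := rfl

/-- The factorization `ŷ : 𝔾 ⥤ Graph` of the Yoneda embedding through graphs, sending
`V` to `I₀` and `E` to `I₁`. -/
def yHat : GObj ⥤ GraphCat where
  obj a := match a with
    | .V => I0
    | .E => I1
  map {a b} f := match a, b, f with
    | .V, .V, f => ⟨f, fun {_ _} h => h.elim⟩
    | .V, .E, f => ⟨f, fun {_ _} h => h.elim⟩
    | .E, .V, f => ⟨f, fun {_ _} _ => Or.inl rfl⟩
    | .E, .E, f => ⟨f, fun {v w} _ => eq_or_ne (f v) (f w)⟩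
  map_id := by rintro (_ | _) <;> rfl
  map_comp := by rintro (_ | _) (_ | _) (_ | _) f g <;> rfl


section Aux

/-- Canonical map `a ⟶ E` in `𝔾`. -/
def g0 : (a : GObj) → (a ⟶ GObj.E)
  | .V => fun _ => false
  | .E => fun b => b

/-- Canonical edge over `f`. -/
def h0 {Y : GraphCat} : {a : GObj} → (yHat.obj a ⟶ Y) → (yHat.obj GObj.E ⟶ Y)
  | .V, f => ⟨fun _ => f.toFun PUnit.unit, fun _ => Or.inl rfl⟩
  | .E, f => f

lemma g0_h0 {Y : GraphCat} {a : GObj} (f : yHat.obj a ⟶ Y) :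
    yHat.map (g0 a) ≫ h0 f = f := by
  cases a <;> exact GraphCat.Hom.ext' rfl

/-- Comparison map `E ⟶ E` induced by `g : a ⟶ E`. -/
def k0 : {a : GObj} → (a ⟶ GObj.E) → (GObj.E ⟶ GObj.E)
  | .V, g => fun _ => g PUnit.unit
  | .E, g => g

lemma g0_k0 {a : GObj} (g : a ⟶ GObj.E) : g0 a ≫ k0 g = g := by
  cases a
  · funext u; rfl
  · rfl

lemma k0_h {Y : GraphCat} {a : GObj} (f : yHat.obj a ⟶ Y) (g : a ⟶ GObj.E)
    (h : yHat.obj GObj.E ⟶ Y) (hw : yHat.map g ≫ h = f) :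
    yHat.map (k0 g) ≫ h = h0 f := by
  cases a
  · apply GraphCat.Hom.ext'; funext b
    show h.toFun (g PUnit.unit) = f.toFun PUnit.unit
    rw [← hw]; rfl
  · exact hw

end Aux

/-- For any (reflexive) graphs `X`, `X'`, the inclusion of the edge subcategory
`(ŷ × ŷ ↓ (X, X'))_{(E,E)}` — the full subcategory of the comma category
`(ŷ × ŷ) ↓ (X, X')` spanned by the objects of the form
`((E,E), (f, f') : (ŷ(E), ŷ(E)) ⟶ (X, X'))` — into `(ŷ × ŷ) ↓ (X, X')` is a final
functor. -/


theorem edge_subcategory_prod_final (X X' : GraphCat) :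
    (ObjectProperty.ι
      (fun c : CostructuredArrow (yHat.prod yHat) (X, X') =>
        c.left = (GObj.E, GObj.E))).Final := by
  constructor
  intro d
  set P := (fun c : CostructuredArrow (yHat.prod yHat) (X, X') =>
        c.left = (GObj.E, GObj.E)) with hP
  let c0 : CostructuredArrow (yHat.prod yHat) (X, X') :=
    CostructuredArrow.mk (Y := (GObj.E, GObj.E))
      ((h0 d.hom.1, h0 d.hom.2) : (yHat.prod yHat).obj (GObj.E, GObj.E) ⟶ (X, X'))
  let c0full : ObjectProperty.FullSubcategory P := ⟨c0, rfl⟩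
  let m0 : d ⟶ c0 := CostructuredArrow.homMk (g0 d.left.1, g0 d.left.2)
    (Prod.ext (g0_h0 d.hom.1) (g0_h0 d.hom.2))
  let j0 : StructuredArrow d (ObjectProperty.ι P) :=
    StructuredArrow.mk (Y := c0full) m0
  have key : ∀ j : StructuredArrow d (ObjectProperty.ι P), Nonempty (j0 ⟶ j) := by
    intro j
    obtain ⟨⟨⟨⟩⟩, ⟨c, hc⟩, m⟩ := j
    obtain ⟨⟨a, a'⟩, ⟨⟨⟩⟩, ⟨h, h'⟩⟩ := c
    rw [hP, Prod.mk.injEq] at hc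
    obtain ⟨rfl, rfl⟩ := hc
    have hw := m.w
    have hw1 := congrArg Prod.fst hw
    have hw2 := congrArg Prod.snd hw
    refine ⟨StructuredArrow.homMk (ObjectProperty.homMk (CostructuredArrow.homMk (k0 m.left.1, k0 m.left.2) ?_)) ?_⟩
    · exact Prod.ext (k0_h d.hom.1 m.left.1 h hw1) (k0_h d.hom.2 m.left.2 h' hw2)
    · apply CostructuredArrow.hom_ext
      exact Prod.ext (g0_k0 m.left.1) (g0_k0 m.left.2)
  have : Nonempty (StructuredArrow d (ObjectProperty.ι P)) := ⟨j0⟩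
  apply zigzag_isConnected
  intro j1 j2
  obtain ⟨u⟩ := key j1
  obtain ⟨v⟩ := key j2
  exact Relation.ReflTransGen.trans
    (Relation.ReflTransGen.single (Or.inr ⟨u⟩))
    (Relation.ReflTransGen.single (Or.inl ⟨v⟩))
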